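/- Let H be a normalized S-Hadamard matrix of order n with rows h₁,...,h_n (h₁ the all-ones vector). Define vectors v^{1,s} = h_{s−1} for s = 2,...,n+1, v^{2,s} = h_{s−1} ∘ h_{s−1} for s = 3,...,n+1, and v^{r,s} = h_{r−1} ∘ h_{s−1} for 3 ≤ r < s ≤ n+1, where ∘ is the entrywise product. Then for each r ∈ {1,...,n+1}, the set B_r = {v^{r,i} : i ≠ r, 1 ≤ i ≤ n+1} consists of n pairwise orthogonal vectors in ℂⁿ. -/

import Mathlib

open scoped BigOperators

/-- The vectors `v^{r,s}` built from the rows of an S-Hadamard matrix.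
Indices `r, s` are 1-based (running over `1, …, n+1`), while `h k` for
`0 ≤ k ≤ n-1` denotes the `(k+1)`-st row of the matrix, so the paper's row
`h_s` is `h (s-1)`.  `v^{1,s} = h_{s-1}`, `v^{2,s} = h_{s-1} ∘ h_{s-1}`, and
`v^{r,s} = h_{r-1} ∘ h_{s-1}` for `3 ≤ r < s`; the definition is symmetrized
via `min`/`max`. -/
noncomputable def starVec (n : ℕ) (h : ℕ → Fin n → ℂ) (r s : ℕ) : Fin n → ℂ :=
  let a := min r s
  let b := max r s
  if a = 1 then h (b - 2)
  else if a = 2 then fun j => h (b - 2) j * h (b - 2) j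
  else fun j => h (a - 2) j * h (b - 2) j

lemma unit_mul (n : ℕ) (h : ℕ → Fin n → ℂ)
    (habs : ∀ k : ℕ, k < n → ∀ j, ‖h k j‖ = 1)
    {k : ℕ} (hk : k < n) (j : Fin n) : h k j * (starRingEnd ℂ) (h k j) = 1 := by
  rw [Complex.mul_conj]
  norm_cast
  rw [Complex.normSq_eq_norm_sq, habs k hk j]
  norm_num

lemma share_core (n : ℕ) (h : ℕ → Fin n → ℂ)
    (hrow : ∀ k l : ℕ, k < n → l < n →
      ∑ j, h k j * (starRingEnd ℂ) (h l j) = if k = l then (n : ℂ) else 0)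
    (habs : ∀ k : ℕ, k < n → ∀ j, ‖h k j‖ = 1)
    (a b c : ℕ) (ha : a < n) (hb : b < n) (hc : c < n) (hbc : b ≠ c) :
    ∑ j, (h a j * h b j) * (starRingEnd ℂ) (h a j * h c j) = 0 := by
  have key : ∀ j : Fin n, (h a j * h b j) * (starRingEnd ℂ) (h a j * h c j)
      = h b j * (starRingEnd ℂ) (h c j) := by
    intro j
    rw [map_mul]
    have hu := unit_mul n h habs ha j
    calc (h a j * h b j) * ((starRingEnd ℂ) (h a j) * (starRingEnd ℂ) (h c j))
        = (h a j * (starRingEnd ℂ) (h a j)) * (h b j * (starRingEnd ℂ) (h c j)) := by ring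
      _ = h b j * (starRingEnd ℂ) (h c j) := by rw [hu, one_mul]
  rw [Finset.sum_congr rfl fun j _ => key j, hrow b c hb hc, if_neg hbc]

lemma shareGen (n : ℕ) (h : ℕ → Fin n → ℂ)
    (hrow : ∀ k l : ℕ, k < n → l < n →
      ∑ j, h k j * (starRingEnd ℂ) (h l j) = if k = l then (n : ℂ) else 0)
    (habs : ∀ k : ℕ, k < n → ∀ j, ‖h k j‖ = 1)
    (a b c d : ℕ) (ha : a < n) (hb : b < n) (hc : c < n) (hd : d < n)
    (hcond : (a = c ∧ b ≠ d) ∨ (a = d ∧ b ≠ c) ∨ (b = c ∧ a ≠ d) ∨ (b = d ∧ a ≠ c)) :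
    ∑ j, (h a j * h b j) * (starRingEnd ℂ) (h c j * h d j) = 0 := by
  rcases hcond with ⟨h1, h2⟩ | ⟨h1, h2⟩ | ⟨h1, h2⟩ | ⟨h1, h2⟩
  · rw [← h1]; exact share_core n h hrow habs a b d ha hb hd h2
  · have e : ∀ j : Fin n, (h a j * h b j) * (starRingEnd ℂ) (h c j * h d j)
        = (h a j * h b j) * (starRingEnd ℂ) (h a j * h c j) := by
      intro j; rw [← h1, mul_comm (h c j)]
    rw [Finset.sum_congr rfl fun j _ => e j]
    exact share_core n h hrow habs a b c ha hb hc h2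
  · have e : ∀ j : Fin n, (h a j * h b j) * (starRingEnd ℂ) (h c j * h d j)
        = (h b j * h a j) * (starRingEnd ℂ) (h b j * h d j) := by
      intro j; rw [← h1, mul_comm (h a j)]
    rw [Finset.sum_congr rfl fun j _ => e j]
    exact share_core n h hrow habs b a d hb ha hd h2
  · have e : ∀ j : Fin n, (h a j * h b j) * (starRingEnd ℂ) (h c j * h d j)
        = (h b j * h a j) * (starRingEnd ℂ) (h b j * h c j) := by
      intro j; rw [← h1, mul_comm (h a j), mul_comm (h c j)]
    rw [Finset.sum_congr rfl fun j _ => e j]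
    exact share_core n h hrow habs b a c hb ha hc h2

lemma msq (n : ℕ) (h : ℕ → Fin n → ℂ)
    (hsq : ∀ k l : ℕ, k < n → l < n → k ≠ l →
      ∑ j, (h k j) ^ 2 * (starRingEnd ℂ) ((h l j) ^ 2) = 0)
    (k l : ℕ) (hk : k < n) (hl : l < n) (hkl : k ≠ l) :
    ∑ j, (h k j * h k j) * (starRingEnd ℂ) (h l j * h l j) = 0 := by
  have := hsq k l hk hl hkl
  simp only [pow_two] at this
  exact this

lemma starVec_form (n : ℕ) (h : ℕ → Fin n → ℂ) (hnorm : ∀ j, h 0 j = 1)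
    (r s : ℕ) (j : Fin n) :
    starVec n h r s j =
      h (if min r s = 1 then 0 else if min r s = 2 then max r s - 2 else min r s - 2) j *
        h (max r s - 2) j := by
  unfold starVec
  by_cases h1 : min r s = 1
  · simp [h1, hnorm]
  · by_cases h2 : min r s = 2
    · simp [h1, h2]
    · simp [h1, h2]

set_option maxHeartbeats 2000000 in
/-- For a normalized S-Hadamard matrix of order `n` with rows `h 0, …, h (n-1)`
(the first row being all ones), for each `r ∈ {1,…,n+1}` the `n` vectors
`{v^{r,i} : i ≠ r}` are pairwise orthogonal in `ℂⁿ`. -/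
theorem starVec_pairwise_orthogonal (n : ℕ) (h : ℕ → Fin n → ℂ)
    (hnorm : ∀ j, h 0 j = 1)
    (hrow : ∀ k l : ℕ, k < n → l < n →
      ∑ j, h k j * (starRingEnd ℂ) (h l j) = if k = l then (n : ℂ) else 0)
    (habs : ∀ k : ℕ, k < n → ∀ j, ‖h k j‖ = 1)
    (hsq : ∀ k l : ℕ, k < n → l < n → k ≠ l →
      ∑ j, (h k j) ^ 2 * (starRingEnd ℂ) ((h l j) ^ 2) = 0) :
    ∀ r ∈ Finset.Icc 1 (n + 1), ∀ i ∈ Finset.Icc 1 (n + 1),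
      ∀ i' ∈ Finset.Icc 1 (n + 1), i ≠ r → i' ≠ r → i ≠ i' →
        ∑ j, starVec n h r i j * (starRingEnd ℂ) (starVec n h r i' j) = 0 := by
  intro r hr i hi i' hi' hir hi'r hii'
  simp only [Finset.mem_Icc] at hr hi hi'
  obtain ⟨hr1, hr2⟩ := hr
  obtain ⟨hia, hib⟩ := hi
  obtain ⟨hia', hib'⟩ := hi'
  rcases Nat.eq_zero_or_pos n with hn0 | hn0
  · exfalso; omega
  simp only [starVec_form n h hnorm]
  by_cases hcr2 : r = 2
  · subst hcr2
    by_cases hi1 : i = 1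
    · subst hi1
      have hi'3 : 3 ≤ i' := by omega
      have e2 : min 2 i' = 2 := by omega
      have e3 : max 2 i' = i' := by omega
      have eA : (if min 2 i' = 1 then 0 else if min 2 i' = 2 then max 2 i' - 2
          else min 2 i' - 2) = i' - 2 := by rw [e2, e3]; norm_num
      have eB : (if min 2 1 = 1 then 0 else if min 2 1 = 2 then max 2 1 - 2
          else min 2 1 - 2) = 0 := by norm_num
      have eC : max 2 1 - 2 = 0 := by norm_num
      rw [eA, e3, eB, eC]
      exact msq n h hsq 0 (i' - 2) (by omega) (by omega) (by omega)
    · by_cases hi'1 : i' = 1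
      · subst hi'1
        have hi3 : 3 ≤ i := by omega
        have e2 : min 2 i = 2 := by omega
        have e3 : max 2 i = i := by omega
        have eA : (if min 2 i = 1 then 0 else if min 2 i = 2 then max 2 i - 2
            else min 2 i - 2) = i - 2 := by rw [e2, e3]; norm_num
        have eB : (if min 2 1 = 1 then 0 else if min 2 1 = 2 then max 2 1 - 2
            else min 2 1 - 2) = 0 := by norm_num
        have eC : max 2 1 - 2 = 0 := by norm_num
        rw [eA, e3, eB, eC]
        exact msq n h hsq (i - 2) 0 (by omega) (by omega) (by omega)
      · have e2 : min 2 i = 2 := by omega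
        have e3 : max 2 i = i := by omega
        have e2' : min 2 i' = 2 := by omega
        have e3' : max 2 i' = i' := by omega
        have eA : (if min 2 i = 1 then 0 else if min 2 i = 2 then max 2 i - 2
            else min 2 i - 2) = i - 2 := by rw [e2, e3]; norm_num
        have eA' : (if min 2 i' = 1 then 0 else if min 2 i' = 2 then max 2 i' - 2
            else min 2 i' - 2) = i' - 2 := by rw [e2', e3']; norm_num
        rw [eA, e3, eA', e3']
        exact msq n h hsq (i - 2) (i' - 2) (by omega) (by omega) (by omega)
  · split_ifs with c1 c2 c3 c4 c5 c6 c7 c8 <;>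
      apply shareGen n h hrow habs <;> omega
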